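/- arXiv:1006.4804 — 3 statements merged into one kernel-verified Lean document; each statement's English description precedes it below -/
import Mathlib

section
/- With the notation of the two Riccati representations: let A, B, P, Q be continuous on [0, b] as above, W₀ an n × m real matrix, [W₁(x); W₂(x)] = ℰ([[A,Q],[P,B]])(x) · [W₀; 1], and [U₁(x), U₂(x)] = [W₀, 1] · ℱ([[−B,P],[Q,−A]])(x). Then for all x ∈ [0, b], U₂(x) · W₁(x) − U₁(x) · W₂(x) = 0. Consequently, wherever both W₂(x) and U₂(x) are invertible, W₁(x) · W₂(x)⁻¹ = U₂(x)⁻¹ · U₁(x), so the two representations of the Riccati solution agree. -/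
open MeasureTheory Matrix

/- Matrices are equipped with the elementwise sup norm. -/
attribute [local instance] Matrix.normedAddCommGroup Matrix.normedSpace

instance matENormedAddMonoid {ι κ : Type*} [Fintype ι] [Fintype κ] :
    ENormedAddMonoid (Matrix ι κ ℝ) := inferInstanceAs (ENormedAddMonoid (ι → κ → ℝ))

instance matPseudoMetrizableSpace {ι κ : Type*} [Fintype ι] [Fintype κ] :
    TopologicalSpace.PseudoMetrizableSpace (Matrix ι κ ℝ) :=
  inferInstanceAs (TopologicalSpace.PseudoMetrizableSpace (ι → κ → ℝ))

/-- Terms of the left integral series: `E_0(x) = 1`, `E_{k+1}(x) = ∫_0^x X(t) * E_k(t) dt`. -/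
noncomputable def lterm {ι : Type*} [Fintype ι] [DecidableEq ι]
    (X : ℝ → Matrix ι ι ℝ) : ℕ → ℝ → Matrix ι ι ℝ
  | 0, _ => 1
  | k + 1, x => ∫ t in (0:ℝ)..x, X t * lterm X k t

/-- The left integral series `ℰ(X)(x) = ∑_{k=0}^∞ E_k(x)`. -/
noncomputable def ES {ι : Type*} [Fintype ι] [DecidableEq ι]
    (X : ℝ → Matrix ι ι ℝ) (x : ℝ) : Matrix ι ι ℝ := ∑' k, lterm X k x

/-- Terms of the right integral series: `F_0(x) = 1`, `F_{k+1}(x) = ∫_0^x F_k(t) * X(t) dt`. -/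
noncomputable def rterm {ι : Type*} [Fintype ι] [DecidableEq ι]
    (X : ℝ → Matrix ι ι ℝ) : ℕ → ℝ → Matrix ι ι ℝ
  | 0, _ => 1
  | k + 1, x => ∫ t in (0:ℝ)..x, rterm X k t * X t

/-- The right integral series `ℱ(X)(x) = ∑_{k=0}^∞ F_k(x)`. -/
noncomputable def FS {ι : Type*} [Fintype ι] [DecidableEq ι]
    (X : ℝ → Matrix ι ι ℝ) (x : ℝ) : Matrix ι ι ℝ := ∑' k, rterm X k x

open Set Finset

section AuxMul

variable {ι κ ρ : Type*} [Fintype ι] [Fintype κ] [Fintype ρ]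

lemma matNorm_mul_le (A : Matrix ι κ ℝ) (B : Matrix κ ρ ℝ) :
    ‖A * B‖ ≤ (Fintype.card κ : ℝ) * ‖A‖ * ‖B‖ := by
  rw [Matrix.norm_le_iff (by positivity)]
  intro i j
  calc ‖(A * B) i j‖ = ‖∑ k, A i k * B k j‖ := by rw [Matrix.mul_apply]
    _ ≤ ∑ k, ‖A i k * B k j‖ := norm_sum_le _ _
    _ ≤ ∑ _k : κ, ‖A‖ * ‖B‖ := by
        refine Finset.sum_le_sum fun k _ => ?_
        rw [norm_mul]
        exact mul_le_mul (Matrix.norm_entry_le_entrywise_sup_norm A)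
          (Matrix.norm_entry_le_entrywise_sup_norm B) (norm_nonneg _) (norm_nonneg _)
    _ = (Fintype.card κ : ℝ) * ‖A‖ * ‖B‖ := by
        rw [Finset.sum_const, Finset.card_univ, nsmul_eq_mul, mul_assoc]

noncomputable def mulCLM : Matrix ι κ ℝ →L[ℝ] Matrix κ ρ ℝ →L[ℝ] Matrix ι ρ ℝ :=
  LinearMap.mkContinuous₂
    (LinearMap.mk₂ ℝ (· * ·) Matrix.add_mul Matrix.smul_mul Matrix.mul_add
      (fun c m n₂ => Matrix.mul_smul m c n₂))
    (Fintype.card κ : ℝ) matNorm_mul_le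

@[simp] lemma mulCLM_apply (A : Matrix ι κ ℝ) (B : Matrix κ ρ ℝ) :
    mulCLM A B = A * B := rfl

lemma HasDerivWithinAt.matMul {f : ℝ → Matrix ι κ ℝ} {g : ℝ → Matrix κ ρ ℝ}
    {f' : Matrix ι κ ℝ} {g' : Matrix κ ρ ℝ} {s : Set ℝ} {x : ℝ}
    (hf : HasDerivWithinAt f f' s x) (hg : HasDerivWithinAt g g' s x) :
    HasDerivWithinAt (fun t => f t * g t) (f' * g x + f x * g') s x := by
  have hbb : IsBoundedBilinearMap ℝ (fun p : Matrix ι κ ℝ × Matrix κ ρ ℝ => p.1 * p.2) :=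
    { add_left := fun x₁ x₂ y => Matrix.add_mul x₁ x₂ y
      smul_left := fun c x y => Matrix.smul_mul c x y
      add_right := fun x y₁ y₂ => Matrix.mul_add x y₁ y₂
      smul_right := fun c x y => Matrix.mul_smul x c y
      bound := ⟨(Fintype.card κ : ℝ) + 1, by positivity, fun x y =>
        (matNorm_mul_le x y).trans (by gcongr; linarith)⟩ }
  have h1 := (hbb.hasFDerivAt (f x, g x)).comp_hasDerivWithinAt x (hf.prodMk hg)
  rw [hbb.deriv_apply] at h1
  rw [add_comm]
  exact h1

lemma ContinuousOn.matMul {f : ℝ → Matrix ι κ ℝ} {g : ℝ → Matrix κ ρ ℝ} {s : Set ℝ}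
    (hf : ContinuousOn f s) (hg : ContinuousOn g s) :
    ContinuousOn (fun t => f t * g t) s := by
  have : Continuous fun p : Matrix ι κ ℝ × Matrix κ ρ ℝ => mulCLM (ρ := ρ) p.1 p.2 :=
    continuous_fst.matrix_mul continuous_snd
  exact this.comp_continuousOn (hf.prodMk hg)

noncomputable def rmulCLM {ι κ ρ : Type*} [Fintype ι] [Fintype κ] [Fintype ρ]
    (K : Matrix κ ρ ℝ) : Matrix ι κ ℝ →L[ℝ] Matrix ι ρ ℝ :=
  LinearMap.mkContinuous
    { toFun := fun A => A * K
      map_add' := fun A B => Matrix.add_mul A B K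
      map_smul' := fun c A => Matrix.smul_mul c A K }
    ((Fintype.card κ : ℝ) * ‖K‖)
    (fun A => by
      calc ‖A * K‖ ≤ (Fintype.card κ : ℝ) * ‖A‖ * ‖K‖ := matNorm_mul_le A K
        _ = (Fintype.card κ : ℝ) * ‖K‖ * ‖A‖ := by ring)

@[simp] lemma rmulCLM_apply {ι κ ρ : Type*} [Fintype ι] [Fintype κ] [Fintype ρ]
    (K : Matrix κ ρ ℝ) (A : Matrix ι κ ℝ) : rmulCLM K A = A * K := rfl

end AuxMul

section Series

variable {σ : Type*} [Fintype σ] [DecidableEq σ] {b : ℝ} {X Y : ℝ → Matrix σ σ ℝ}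

lemma lterm_succ (X : ℝ → Matrix σ σ ℝ) (k : ℕ) (x : ℝ) :
    lterm X (k + 1) x = ∫ t in (0:ℝ)..x, X t * lterm X k t := rfl

lemma rterm_succ (X : ℝ → Matrix σ σ ℝ) (k : ℕ) (x : ℝ) :
    rterm X (k + 1) x = ∫ t in (0:ℝ)..x, rterm X k t * X t := rfl

lemma norm_one_le : ‖(1 : Matrix σ σ ℝ)‖ ≤ 1 := by
  rw [Matrix.norm_le_iff zero_le_one]
  intro i j
  by_cases h : i = j <;> simp [Matrix.one_apply, h]

lemma contOn_intervalIntegrable {f : ℝ → Matrix σ σ ℝ} (hf : ContinuousOn f (Icc 0 b))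
    {x : ℝ} (hx : x ∈ Icc 0 b) : IntervalIntegrable f volume 0 x := by
  apply ContinuousOn.intervalIntegrable
  rw [uIcc_of_le hx.1]
  exact hf.mono (Icc_subset_Icc le_rfl hx.2)

lemma lterm_contOn (hb : (0:ℝ) ≤ b) (hX : ContinuousOn X (Icc 0 b)) :
    ∀ k, ContinuousOn (lterm X k) (Icc 0 b)
  | 0 => continuousOn_const
  | (k+1) => by
    have ih := lterm_contOn hb hX k
    have hint : IntegrableOn (fun t => X t * lterm X k t) (uIcc 0 b) volume := by
      rw [uIcc_of_le hb]
      exact (hX.matMul ih).integrableOn_Icc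
    have h2 := intervalIntegral.continuousOn_primitive_interval hint
    rw [uIcc_of_le hb] at h2
    exact h2.congr fun x _ => lterm_succ X k x

lemma rterm_contOn (hb : (0:ℝ) ≤ b) (hX : ContinuousOn X (Icc 0 b)) :
    ∀ k, ContinuousOn (rterm X k) (Icc 0 b)
  | 0 => continuousOn_const
  | (k+1) => by
    have ih := rterm_contOn hb hX k
    have hint : IntegrableOn (fun t => rterm X k t * X t) (uIcc 0 b) volume := by
      rw [uIcc_of_le hb]
      exact (ih.matMul hX).integrableOn_Icc
    have h2 := intervalIntegral.continuousOn_primitive_interval hint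
    rw [uIcc_of_le hb] at h2
    exact h2.congr fun x _ => rterm_succ X k x

lemma aux_integral_pow {D : ℝ} (k : ℕ) (x : ℝ) :
    ∫ t in (0:ℝ)..x, D * ((D * t) ^ k / (Nat.factorial k : ℝ)) =
      (D * x) ^ (k+1) / (Nat.factorial (k+1) : ℝ) := by
  have hfac : (Nat.factorial k : ℝ) ≠ 0 := Nat.cast_ne_zero.2 (Nat.factorial_ne_zero k)
  have h1 : ∀ t ∈ uIcc (0:ℝ) x, D * ((D * t) ^ k / (Nat.factorial k : ℝ)) =
      (D ^ (k+1) / (Nat.factorial k : ℝ)) * t ^ k := by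
    intro t _; rw [mul_pow]; ring
  rw [intervalIntegral.integral_congr h1, intervalIntegral.integral_const_mul, integral_pow,
    Nat.factorial_succ]
  rw [zero_pow (Nat.succ_ne_zero k), mul_pow]
  push_cast
  field_simp
  rw [sub_zero]

lemma lterm_norm_le (hX : ContinuousOn X (Icc 0 b)) {D : ℝ}
    (hD : ∀ t ∈ Icc (0:ℝ) b, (Fintype.card σ : ℝ) * ‖X t‖ ≤ D) (hD0 : 0 ≤ D) :
    ∀ k, ∀ x ∈ Icc (0:ℝ) b, ‖lterm X k x‖ ≤ (D * x) ^ k / (Nat.factorial k : ℝ)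
  | 0 => by intro x _; simpa [lterm] using norm_one_le
  | (k+1) => by
    intro x hx
    have ih := lterm_norm_le hX hD hD0 k
    rw [lterm_succ]
    have hb : (0:ℝ) ≤ b := le_trans hx.1 hx.2
    have hsub : Icc (0:ℝ) x ⊆ Icc 0 b := Icc_subset_Icc le_rfl hx.2
    have hgle : ∀ t ∈ Icc (0:ℝ) x, ‖X t * lterm X k t‖ ≤
        D * ((D * t) ^ k / (Nat.factorial k : ℝ)) := by
      intro t ht
      calc ‖X t * lterm X k t‖ ≤ (Fintype.card σ : ℝ) * ‖X t‖ * ‖lterm X k t‖ :=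
            matNorm_mul_le _ _
        _ ≤ D * ((D * t) ^ k / (Nat.factorial k : ℝ)) := by
            apply mul_le_mul (hD t (hsub ht)) (ih t (hsub ht)) (norm_nonneg _) hD0
    calc ‖∫ t in (0:ℝ)..x, X t * lterm X k t‖
        ≤ |∫ t in (0:ℝ)..x, D * ((D * t) ^ k / (Nat.factorial k : ℝ))| := by
          apply intervalIntegral.norm_integral_le_abs_of_norm_le
          · rw [uIoc_of_le hx.1]
            filter_upwards [ae_restrict_mem measurableSet_Ioc] with t ht
            exact hgle t ⟨le_of_lt ht.1, ht.2⟩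
          · exact (Continuous.intervalIntegrable (by continuity) 0 x)
      _ = ∫ t in (0:ℝ)..x, D * ((D * t) ^ k / (Nat.factorial k : ℝ)) := by
          apply abs_of_nonneg
          apply intervalIntegral.integral_nonneg hx.1
          intro t ht
          have h1 : (0:ℝ) ≤ D * t := mul_nonneg hD0 ht.1
          positivity
      _ = (D * x) ^ (k+1) / (Nat.factorial (k+1) : ℝ) := aux_integral_pow k x

lemma rterm_norm_le (hX : ContinuousOn X (Icc 0 b)) {D : ℝ}
    (hD : ∀ t ∈ Icc (0:ℝ) b, (Fintype.card σ : ℝ) * ‖X t‖ ≤ D) (hD0 : 0 ≤ D) :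
    ∀ k, ∀ x ∈ Icc (0:ℝ) b, ‖rterm X k x‖ ≤ (D * x) ^ k / (Nat.factorial k : ℝ)
  | 0 => by intro x _; simpa [rterm] using norm_one_le
  | (k+1) => by
    intro x hx
    have ih := rterm_norm_le hX hD hD0 k
    rw [rterm_succ]
    have hsub : Icc (0:ℝ) x ⊆ Icc 0 b := Icc_subset_Icc le_rfl hx.2
    have hgle : ∀ t ∈ Icc (0:ℝ) x, ‖rterm X k t * X t‖ ≤
        D * ((D * t) ^ k / (Nat.factorial k : ℝ)) := by
      intro t ht
      calc ‖rterm X k t * X t‖ ≤ (Fintype.card σ : ℝ) * ‖rterm X k t‖ * ‖X t‖ :=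
            matNorm_mul_le _ _
        _ = ((Fintype.card σ : ℝ) * ‖X t‖) * ‖rterm X k t‖ := by ring
        _ ≤ D * ((D * t) ^ k / (Nat.factorial k : ℝ)) := by
            apply mul_le_mul (hD t (hsub ht)) (ih t (hsub ht)) (norm_nonneg _) hD0
    calc ‖∫ t in (0:ℝ)..x, rterm X k t * X t‖
        ≤ |∫ t in (0:ℝ)..x, D * ((D * t) ^ k / (Nat.factorial k : ℝ))| := by
          apply intervalIntegral.norm_integral_le_abs_of_norm_le
          · rw [uIoc_of_le hx.1]
            filter_upwards [ae_restrict_mem measurableSet_Ioc] with t ht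
            exact hgle t ⟨le_of_lt ht.1, ht.2⟩
          · exact (Continuous.intervalIntegrable (by continuity) 0 x)
      _ = ∫ t in (0:ℝ)..x, D * ((D * t) ^ k / (Nat.factorial k : ℝ)) := by
          apply abs_of_nonneg
          apply intervalIntegral.integral_nonneg hx.1
          intro t ht
          have h1 : (0:ℝ) ≤ D * t := mul_nonneg hD0 ht.1
          positivity
      _ = (D * x) ^ (k+1) / (Nat.factorial (k+1) : ℝ) := aux_integral_pow k x

/-- A uniform bound `D` with `card * ‖X t‖ ≤ D`, `0 ≤ D`. -/
lemma exists_D (hX : ContinuousOn X (Icc 0 b)) :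
    ∃ D : ℝ, 0 ≤ D ∧ ∀ t ∈ Icc (0:ℝ) b, (Fintype.card σ : ℝ) * ‖X t‖ ≤ D := by
  obtain ⟨C, hC⟩ := isCompact_Icc.exists_bound_of_continuousOn hX
  refine ⟨max ((Fintype.card σ : ℝ) * C) 0, le_max_right _ _, fun t ht => ?_⟩
  exact le_trans (mul_le_mul_of_nonneg_left (hC t ht) (by positivity)) (le_max_left _ _)

lemma lterm_summable (hX : ContinuousOn X (Icc 0 b)) {x : ℝ} (hx : x ∈ Icc (0:ℝ) b) :
    Summable fun k => lterm X k x := by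
  obtain ⟨D, hD0, hD⟩ := exists_D hX
  apply Summable.of_norm
  apply Summable.of_nonneg_of_le (fun k => norm_nonneg _)
    (fun k => lterm_norm_le hX hD hD0 k x hx)
  exact Real.summable_pow_div_factorial (D * x)

lemma rterm_summable (hX : ContinuousOn X (Icc 0 b)) {x : ℝ} (hx : x ∈ Icc (0:ℝ) b) :
    Summable fun k => rterm X k x := by
  obtain ⟨D, hD0, hD⟩ := exists_D hX
  apply Summable.of_norm
  apply Summable.of_nonneg_of_le (fun k => norm_nonneg _)
    (fun k => rterm_norm_le hX hD hD0 k x hx)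
  exact Real.summable_pow_div_factorial (D * x)

lemma summable_mul_prod (hX : ContinuousOn X (Icc 0 b)) (hY : ContinuousOn Y (Icc 0 b))
    {x : ℝ} (hx : x ∈ Icc (0:ℝ) b) :
    Summable fun p : ℕ × ℕ => rterm X p.1 x * lterm Y p.2 x := by
  obtain ⟨D₁, hD₁0, hD₁⟩ := exists_D hX
  obtain ⟨D₂, hD₂0, hD₂⟩ := exists_D hY
  apply Summable.of_norm
  have hb1 := fun k => rterm_norm_le hX hD₁ hD₁0 k x hx
  have hb2 := fun k => lterm_norm_le hY hD₂ hD₂0 k x hx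
  apply Summable.of_nonneg_of_le (fun p => norm_nonneg _)
    (f := fun p : ℕ × ℕ => (Fintype.card σ : ℝ) *
      (((D₁ * x) ^ p.1 / (Nat.factorial p.1 : ℝ)) * ((D₂ * x) ^ p.2 / (Nat.factorial p.2 : ℝ))))
  · intro p
    calc ‖rterm X p.1 x * lterm Y p.2 x‖
        ≤ (Fintype.card σ : ℝ) * ‖rterm X p.1 x‖ * ‖lterm Y p.2 x‖ := matNorm_mul_le _ _
      _ ≤ (Fintype.card σ : ℝ) *
          (((D₁ * x) ^ p.1 / (Nat.factorial p.1 : ℝ)) * ((D₂ * x) ^ p.2 / (Nat.factorial p.2 : ℝ))) := by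
          rw [mul_assoc]
          apply mul_le_mul_of_nonneg_left _ (by positivity)
          apply mul_le_mul (hb1 p.1) (hb2 p.2) (norm_nonneg _)
          have h1 : (0:ℝ) ≤ D₁ * x := mul_nonneg hD₁0 hx.1
          positivity
  · apply Summable.mul_left
    apply Summable.mul_of_nonneg (Real.summable_pow_div_factorial (D₁ * x))
      (Real.summable_pow_div_factorial (D₂ * x))
    · intro k
      have : (0:ℝ) ≤ D₁ * x := mul_nonneg hD₁0 hx.1
      positivity
    · intro k
      have : (0:ℝ) ≤ D₂ * x := mul_nonneg hD₂0 hx.1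
      positivity

lemma primitive_hasDeriv {f : ℝ → Matrix σ σ ℝ} (hf : ContinuousOn f (Icc 0 b))
    {x : ℝ} (hx : x ∈ Ico (0:ℝ) b) :
    HasDerivWithinAt (fun u => ∫ t in (0:ℝ)..u, f t) (f x) (Ici x) x := by
  have hmem : Icc (0:ℝ) b ∈ nhdsWithin x (Ici x) := Icc_mem_nhdsGE_of_mem hx
  have hmem' : Icc (0:ℝ) b ∈ nhdsWithin x (Ioi x) :=
    nhdsWithin_mono x Ioi_subset_Ici_self hmem
  exact intervalIntegral.integral_hasDerivWithinAt_right
    (contOn_intervalIntegrable hf ⟨hx.1, hx.2.le⟩)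
    ⟨Icc 0 b, hmem', hf.aestronglyMeasurable measurableSet_Icc⟩
    ((hf x ⟨hx.1, hx.2.le⟩).mono_of_mem_nhdsWithin hmem')

end Series

section Key

variable {σ τ : Type*} [Fintype σ] [DecidableEq σ] [Fintype τ] [DecidableEq τ] {b : ℝ}

lemma lterm_swap {X : ℝ → Matrix σ σ ℝ} {Y : ℝ → Matrix τ τ ℝ} (K : Matrix τ σ ℝ)
    (hX : ContinuousOn X (Icc 0 b)) (hY : ContinuousOn Y (Icc 0 b))
    (hK : ∀ t, K * X t = Y t * K) :
    ∀ k, ∀ x ∈ Icc (0:ℝ) b, K * lterm X k x = lterm Y k x * K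
  | 0 => by intro x _; show K * 1 = 1 * K; rw [Matrix.mul_one, Matrix.one_mul]
  | (k+1) => by
    intro x hx
    have ih := lterm_swap K hX hY hK k
    have hb : (0:ℝ) ≤ b := le_trans hx.1 hx.2
    have hcX : ContinuousOn (fun t => X t * lterm X k t) (Icc 0 b) :=
      hX.matMul (lterm_contOn hb hX k)
    have hcY : ContinuousOn (fun t => Y t * lterm Y k t) (Icc 0 b) :=
      hY.matMul (lterm_contOn hb hY k)
    have hintX : IntervalIntegrable (fun t => X t * lterm X k t) volume 0 x :=
      contOn_intervalIntegrable hcX hx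
    have hintY : IntervalIntegrable (fun t => Y t * lterm Y k t) volume 0 x :=
      contOn_intervalIntegrable hcY hx
    rw [lterm_succ, lterm_succ]
    calc K * ∫ t in (0:ℝ)..x, X t * lterm X k t
        = mulCLM K (∫ t in (0:ℝ)..x, X t * lterm X k t) := rfl
      _ = ∫ t in (0:ℝ)..x, mulCLM K (X t * lterm X k t) :=
          ((mulCLM K).intervalIntegral_comp_comm hintX).symm
      _ = ∫ t in (0:ℝ)..x, (rmulCLM K) (Y t * lterm Y k t) := by
          apply intervalIntegral.integral_congr
          intro t ht
          rw [uIcc_of_le hx.1] at ht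
          have htb : t ∈ Icc (0:ℝ) b := ⟨ht.1, le_trans ht.2 hx.2⟩
          show K * (X t * lterm X k t) = (Y t * lterm Y k t) * K
          rw [← Matrix.mul_assoc, hK t, Matrix.mul_assoc, ih t htb, ← Matrix.mul_assoc]
      _ = (rmulCLM K) (∫ t in (0:ℝ)..x, Y t * lterm Y k t) :=
          (rmulCLM K).intervalIntegral_comp_comm hintY
      _ = (∫ t in (0:ℝ)..x, Y t * lterm Y k t) * K := rfl

lemma cancel {X : ℝ → Matrix σ σ ℝ} (hb : (0:ℝ) ≤ b) (hX : ContinuousOn X (Icc 0 b)) (k : ℕ) :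
    ∀ x ∈ Icc (0:ℝ) b,
      ∑ p ∈ Finset.HasAntidiagonal.antidiagonal (k+1), rterm X p.1 x * lterm (fun t => -X t) p.2 x = 0 := by
  have hY : ContinuousOn (fun t => -X t) (Icc 0 b) := hX.neg
  have hcont : ContinuousOn
      (fun x => ∑ p ∈ Finset.HasAntidiagonal.antidiagonal (k+1), rterm X p.1 x * lterm (fun t => -X t) p.2 x)
      (Icc 0 b) := by
    apply continuousOn_finset_sum
    intro p _
    exact (rterm_contOn hb hX p.1).matMul (lterm_contOn hb hY p.2)
  have hderiv : ∀ x ∈ Ico (0:ℝ) b, HasDerivWithinAt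
      (fun x => ∑ p ∈ Finset.HasAntidiagonal.antidiagonal (k+1), rterm X p.1 x * lterm (fun t => -X t) p.2 x)
      0 (Ici x) x := by
    intro x hx
    have hr : ∀ i, HasDerivWithinAt (fun u => rterm X i u)
        (Nat.casesOn i 0 (fun i' => rterm X i' x * X x)) (Ici x) x := by
      intro i
      cases i with
      | zero => exact hasDerivWithinAt_const x _ (1 : Matrix σ σ ℝ)
      | succ i => exact primitive_hasDeriv ((rterm_contOn hb hX i).matMul hX) hx
    have hl : ∀ j, HasDerivWithinAt (fun u => lterm (fun t => -X t) j u)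
        (Nat.casesOn j 0 (fun j' => (-X x) * lterm (fun t => -X t) j' x)) (Ici x) x := by
      intro j
      cases j with
      | zero => exact hasDerivWithinAt_const x _ (1 : Matrix σ σ ℝ)
      | succ j => exact primitive_hasDeriv (hY.matMul (lterm_contOn hb hY j)) hx
    have hsum := HasDerivWithinAt.sum
      (u := Finset.HasAntidiagonal.antidiagonal (k+1))
      (A := fun p u => rterm X p.1 u * lterm (fun t => -X t) p.2 u)
      (A' := fun p => (Nat.casesOn p.1 0 (fun i' => rterm X i' x * X x))
          * lterm (fun t => -X t) p.2 x
        + rterm X p.1 x * (Nat.casesOn p.2 0 (fun j' => (-X x) * lterm (fun t => -X t) j' x)))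
      (fun p _ => (hr p.1).matMul (hl p.2))
    have hzero : (∑ p ∈ Finset.HasAntidiagonal.antidiagonal (k+1),
        ((Nat.casesOn p.1 0 (fun i' => rterm X i' x * X x)
            : Matrix σ σ ℝ) * lterm (fun t => -X t) p.2 x
          + rterm X p.1 x * (Nat.casesOn p.2 0
            (fun j' => (-X x) * lterm (fun t => -X t) j' x)))) = 0 := by
      rw [Finset.sum_add_distrib]
      rw [Finset.Nat.sum_antidiagonal_succ, Finset.Nat.sum_antidiagonal_succ']
      simp only [Nat.rec_zero, Prod.fst, Prod.snd, zero_mul, mul_zero, zero_add, add_zero]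
      rw [← Finset.sum_add_distrib]
      apply Finset.sum_eq_zero
      intro p _
      simp [mul_assoc, neg_mul, mul_neg]
    rw [hzero] at hsum
    rw [Finset.sum_fn] at hsum
    exact hsum
  intro x hx
  have h0 := constant_of_has_deriv_right_zero hcont hderiv x hx
  rw [h0]
  apply Finset.sum_eq_zero
  intro p hp
  have hpsum : p.1 + p.2 = k + 1 := Finset.HasAntidiagonal.mem_antidiagonal.1 hp
  rcases p with ⟨i, j⟩
  cases i with
  | zero =>
    cases j with
    | zero => omega
    | succ j' =>
      rw [lterm_succ, intervalIntegral.integral_same, mul_zero]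
  | succ i' =>
    rw [rterm_succ, intervalIntegral.integral_same, zero_mul]

end Key

section Assemble

variable {σ τ : Type*} [Fintype σ] [DecidableEq σ] [Fintype τ] [DecidableEq τ] {b : ℝ}

lemma FS_mul_ES_neg {X : ℝ → Matrix σ σ ℝ} (hX : ContinuousOn X (Icc 0 b))
    {x : ℝ} (hx : x ∈ Icc (0:ℝ) b) :
    FS X x * ES (fun t => -X t) x = 1 := by
  have hY : ContinuousOn (fun t => -X t) (Icc 0 b) := hX.neg
  have hb : (0:ℝ) ≤ b := le_trans hx.1 hx.2
  rw [FS, ES]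
  rw [Summable.tsum_mul_tsum_eq_tsum_sum_antidiagonal (rterm_summable hX hx) (lterm_summable hY hx)
    (summable_mul_prod hX hY hx)]
  rw [tsum_eq_single 0]
  · show ∑ p ∈ Finset.HasAntidiagonal.antidiagonal 0, rterm X p.1 x * lterm (fun t => -X t) p.2 x = 1
    rw [Finset.Nat.antidiagonal_zero, Finset.sum_singleton]
    show (1 : Matrix σ σ ℝ) * 1 = 1
    rw [Matrix.one_mul]
  · intro k hk
    obtain ⟨k', rfl⟩ := Nat.exists_eq_succ_of_ne_zero hk
    exact cancel hb hX k' x hx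

lemma ES_swap {X : ℝ → Matrix σ σ ℝ} {Y : ℝ → Matrix τ τ ℝ} (K : Matrix τ σ ℝ)
    (hX : ContinuousOn X (Icc 0 b)) (hY : ContinuousOn Y (Icc 0 b))
    (hK : ∀ t, K * X t = Y t * K) {x : ℝ} (hx : x ∈ Icc (0:ℝ) b) :
    K * ES X x = ES Y x * K := by
  rw [ES, ES]
  calc K * ∑' k, lterm X k x = mulCLM K (∑' k, lterm X k x) := rfl
    _ = ∑' k, mulCLM K (lterm X k x) :=
        ContinuousLinearMap.map_tsum _ (lterm_summable hX hx)
    _ = ∑' k, rmulCLM K (lterm Y k x) := by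
        apply tsum_congr
        intro k
        show K * lterm X k x = lterm Y k x * K
        exact lterm_swap K hX hY hK k x hx
    _ = rmulCLM K (∑' k, lterm Y k x) :=
        (ContinuousLinearMap.map_tsum _ (lterm_summable hY hx)).symm
    _ = (∑' k, lterm Y k x) * K := rfl

end Assemble

/-- the two Riccati representations agree:
`U₂·W₁ − U₁·W₂ = 0`, and where `W₂` and `U₂` are invertible, `W₁·W₂⁻¹ = U₂⁻¹·U₁`. -/
theorem riccati_representations_agree {n m : ℕ} (b : ℝ)
    (A : ℝ → Matrix (Fin n) (Fin n) ℝ) (B : ℝ → Matrix (Fin m) (Fin m) ℝ)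
    (P : ℝ → Matrix (Fin m) (Fin n) ℝ) (Q : ℝ → Matrix (Fin n) (Fin m) ℝ)
    (hA : ContinuousOn A (Set.Icc 0 b)) (hB : ContinuousOn B (Set.Icc 0 b))
    (hP : ContinuousOn P (Set.Icc 0 b)) (hQ : ContinuousOn Q (Set.Icc 0 b))
    (W₀ : Matrix (Fin n) (Fin m) ℝ)
    (M : ℝ → Matrix (Fin n ⊕ Fin m) (Fin n ⊕ Fin m) ℝ)
    (hM : ∀ x, M x = Matrix.fromBlocks (A x) (Q x) (P x) (B x))
    (N : ℝ → Matrix (Fin m ⊕ Fin n) (Fin m ⊕ Fin n) ℝ)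
    (hN : ∀ x, N x = Matrix.fromBlocks (-B x) (P x) (Q x) (-A x))
    (W₁ : ℝ → Matrix (Fin n) (Fin m) ℝ) (W₂ : ℝ → Matrix (Fin m) (Fin m) ℝ)
    (hW₁ : ∀ x, W₁ x =
      (ES M x * Matrix.fromRows W₀ (1 : Matrix (Fin m) (Fin m) ℝ)).submatrix Sum.inl id)
    (hW₂ : ∀ x, W₂ x =
      (ES M x * Matrix.fromRows W₀ (1 : Matrix (Fin m) (Fin m) ℝ)).submatrix Sum.inr id)
    (U₁ : ℝ → Matrix (Fin n) (Fin m) ℝ) (U₂ : ℝ → Matrix (Fin n) (Fin n) ℝ)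
    (hU₁ : ∀ x, U₁ x =
      (Matrix.fromCols W₀ (1 : Matrix (Fin n) (Fin n) ℝ) * FS N x).submatrix id Sum.inl)
    (hU₂ : ∀ x, U₂ x =
      (Matrix.fromCols W₀ (1 : Matrix (Fin n) (Fin n) ℝ) * FS N x).submatrix id Sum.inr) :
    ∀ x ∈ Set.Icc (0:ℝ) b,
      U₂ x * W₁ x - U₁ x * W₂ x = 0 ∧
      (IsUnit (W₂ x) → IsUnit (U₂ x) → W₁ x * (W₂ x)⁻¹ = (U₂ x)⁻¹ * U₁ x) := by
  intro x hx
  have hb : (0:ℝ) ≤ b := le_trans hx.1 hx.2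
  -- continuity of M and N
  have hMc : ContinuousOn M (Icc 0 b) := by
    have h1 : ContinuousOn (fun t => Matrix.fromBlocks (A t) (Q t) (P t) (B t)) (Icc 0 b) := by
      rw [continuousOn_iff_continuous_restrict] at hA hB hP hQ ⊢
      exact Continuous.matrix_fromBlocks hA hQ hP hB
    exact h1.congr fun t _ => hM t
  have hNc : ContinuousOn N (Icc 0 b) := by
    have h1 : ContinuousOn (fun t => Matrix.fromBlocks (-B t) (P t) (Q t) (-A t)) (Icc 0 b) := by
      rw [continuousOn_iff_continuous_restrict] at hA hB hP hQ ⊢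
      exact Continuous.matrix_fromBlocks hB.neg hP hQ hA.neg
    exact h1.congr fun t _ => hN t
  have hNnc : ContinuousOn (fun t => -N t) (Icc 0 b) := hNc.neg
  -- the constant matrix K
  set K : Matrix (Fin m ⊕ Fin n) (Fin n ⊕ Fin m) ℝ :=
    Matrix.fromBlocks 0 (-1) 1 0 with hKdef
  have hKM : ∀ t, K * M t = (fun u => -N u) t * K := by
    intro t
    show K * M t = -N t * K
    rw [hM t, hN t, hKdef, Matrix.fromBlocks_neg, Matrix.fromBlocks_multiply,
      Matrix.fromBlocks_multiply]
    congr 1 <;> simp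
  -- the fundamental identity
  have hswap : K * ES M x = ES (fun t => -N t) x * K := ES_swap K hMc hNnc hKM hx
  have hFSES : FS N x * ES (fun t => -N t) x = 1 := FS_mul_ES_neg hNc hx
  have hkey : FS N x * (K * ES M x) = K := by
    rw [hswap, ← Matrix.mul_assoc, hFSES, Matrix.one_mul]
  -- block assembly
  have hWfull : Matrix.fromRows (W₁ x) (W₂ x) =
      ES M x * Matrix.fromRows W₀ (1 : Matrix (Fin m) (Fin m) ℝ) := by
    rw [hW₁ x, hW₂ x]
    ext i j
    cases i <;> rfl
  have hUfull : Matrix.fromCols (U₁ x) (U₂ x) =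
      Matrix.fromCols W₀ (1 : Matrix (Fin n) (Fin n) ℝ) * FS N x := by
    rw [hU₁ x, hU₂ x]
    ext i j
    cases j <;> rfl
  have e1 : Matrix.fromCols (U₁ x) (U₂ x) * K =
      Matrix.fromCols (U₂ x) (-(U₁ x)) := by
    rw [hKdef, Matrix.fromCols_mul_fromBlocks]
    congr 1 <;> simp
  have e2 : Matrix.fromCols W₀ (1 : Matrix (Fin n) (Fin n) ℝ) * K =
      Matrix.fromCols (1 : Matrix (Fin n) (Fin n) ℝ) (-W₀) := by
    rw [hKdef, Matrix.fromCols_mul_fromBlocks]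
    congr 1 <;> simp
  have hmain : U₂ x * W₁ x + (-(U₁ x)) * W₂ x = 0 := by
    calc U₂ x * W₁ x + (-(U₁ x)) * W₂ x
        = Matrix.fromCols (U₂ x) (-(U₁ x)) * Matrix.fromRows (W₁ x) (W₂ x) :=
          (Matrix.fromCols_mul_fromRows _ _ _ _).symm
      _ = (Matrix.fromCols (U₁ x) (U₂ x) * K) * Matrix.fromRows (W₁ x) (W₂ x) := by
          rw [e1]
      _ = (Matrix.fromCols W₀ (1 : Matrix (Fin n) (Fin n) ℝ) * FS N x) * K *
          (ES M x * Matrix.fromRows W₀ (1 : Matrix (Fin m) (Fin m) ℝ)) := by rw [hUfull, hWfull]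
      _ = Matrix.fromCols W₀ (1 : Matrix (Fin n) (Fin n) ℝ) * (FS N x * (K * ES M x)) *
          Matrix.fromRows W₀ (1 : Matrix (Fin m) (Fin m) ℝ) := by
          simp only [Matrix.mul_assoc]
      _ = Matrix.fromCols W₀ (1 : Matrix (Fin n) (Fin n) ℝ) * K *
          Matrix.fromRows W₀ (1 : Matrix (Fin m) (Fin m) ℝ) := by
          rw [hkey]
      _ = Matrix.fromCols (1 : Matrix (Fin n) (Fin n) ℝ) (-W₀) *
          Matrix.fromRows W₀ (1 : Matrix (Fin m) (Fin m) ℝ) := by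
          rw [e2]
      _ = 0 := by
          rw [Matrix.fromCols_mul_fromRows, Matrix.one_mul, Matrix.mul_one]
          simp
  have hsub : U₂ x * W₁ x - U₁ x * W₂ x = 0 := by
    rw [sub_eq_add_neg, ← Matrix.neg_mul]
    exact hmain
  refine ⟨hsub, fun hW hU => ?_⟩
  have heq : U₂ x * W₁ x = U₁ x * W₂ x := by
    have := sub_eq_zero.mp hsub
    exact this
  have hUdet : IsUnit (U₂ x).det := (Matrix.isUnit_iff_isUnit_det _).mp hU
  have hWdet : IsUnit (W₂ x).det := (Matrix.isUnit_iff_isUnit_det _).mp hW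
  calc W₁ x * (W₂ x)⁻¹ = (U₂ x)⁻¹ * (U₂ x) * (W₁ x * (W₂ x)⁻¹) := by
        rw [Matrix.nonsing_inv_mul _ hUdet, Matrix.one_mul]
    _ = (U₂ x)⁻¹ * (U₂ x * W₁ x) * (W₂ x)⁻¹ := by
        simp only [Matrix.mul_assoc]
    _ = (U₂ x)⁻¹ * U₁ x * (W₂ x * (W₂ x)⁻¹) := by
        rw [heq]
        simp only [Matrix.mul_assoc]
    _ = (U₂ x)⁻¹ * U₁ x := by
        rw [Matrix.mul_nonsing_inv _ hWdet, Matrix.mul_one]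
end

section
/- Let A : ℝ → Matrix (Fin n) (Fin n) ℝ, B : ℝ → Matrix (Fin m) (Fin m) ℝ, P : ℝ → Matrix (Fin m) (Fin n) ℝ be continuous on [0, b]. If W : ℝ → Matrix (Fin n) (Fin m) ℝ is differentiable and bounded on [0, b], satisfies d/dx W(x) + W(x)·P(x)·W(x) + W(x)·B(x) − A(x)·W(x) = 0 on [0, b], and W(0) = 0, then W(x) = 0 for all x ∈ [0, b]. -/
open MeasureTheory Matrix

/- Matrices are equipped with the elementwise sup norm. -/
attribute [local instance] Matrix.normedAddCommGroup Matrix.normedSpace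

/-- Sup-norm bound on a matrix product. -/
lemma norm_matrix_mul_le' {n k m : ℕ} (X : Matrix (Fin n) (Fin k) ℝ)
    (Y : Matrix (Fin k) (Fin m) ℝ) : ‖X * Y‖ ≤ k * ‖X‖ * ‖Y‖ := by
  rw [Matrix.norm_le_iff (by positivity)]
  intro i j
  rw [Matrix.mul_apply]
  calc ‖∑ l, X i l * Y l j‖ ≤ ∑ l, ‖X i l * Y l j‖ := norm_sum_le _ _
    _ ≤ ∑ _l : Fin k, ‖X‖ * ‖Y‖ := by
        refine Finset.sum_le_sum fun l _ => ?_
        rw [norm_mul]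
        exact mul_le_mul (Matrix.norm_entry_le_entrywise_sup_norm X)
          (Matrix.norm_entry_le_entrywise_sup_norm Y) (norm_nonneg _) (norm_nonneg _)
    _ = k * ‖X‖ * ‖Y‖ := by simp [mul_assoc]

/-- a bounded solution of the homogeneous Riccati equation
`W' + W·P·W + W·B − A·W = 0` with `W 0 = 0` vanishes identically on `[0,b]`. -/
theorem riccati_homogeneous_zero {n m : ℕ} (b : ℝ)
    (A : ℝ → Matrix (Fin n) (Fin n) ℝ) (B : ℝ → Matrix (Fin m) (Fin m) ℝ)
    (P : ℝ → Matrix (Fin m) (Fin n) ℝ)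
    (hA : ContinuousOn A (Set.Icc 0 b)) (hB : ContinuousOn B (Set.Icc 0 b))
    (hP : ContinuousOn P (Set.Icc 0 b))
    (W W' : ℝ → Matrix (Fin n) (Fin m) ℝ)
    (hW : ∀ x ∈ Set.Icc (0:ℝ) b, HasDerivWithinAt W (W' x) (Set.Icc 0 b) x)
    (hbdd : ∃ K, ∀ x ∈ Set.Icc (0:ℝ) b, ‖W x‖ ≤ K)
    (heq : ∀ x ∈ Set.Icc (0:ℝ) b,
      W' x + W x * P x * W x + W x * B x - A x * W x = 0)
    (hW0 : W 0 = 0) :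
    ∀ x ∈ Set.Icc (0:ℝ) b, W x = 0 := by
  rcases lt_or_ge b 0 with hb | hb
  · intro x hx
    exact absurd (hx.1.trans hx.2) (not_le.mpr hb)
  obtain ⟨K, hK⟩ := hbdd
  have h0mem : (0:ℝ) ∈ Set.Icc (0:ℝ) b := ⟨le_refl _, hb⟩
  have hK0 : 0 ≤ K := le_trans (norm_nonneg _) (hK 0 h0mem)
  obtain ⟨MA, hMA⟩ := IsCompact.exists_bound_of_continuousOn isCompact_Icc hA
  obtain ⟨MB, hMB⟩ := IsCompact.exists_bound_of_continuousOn isCompact_Icc hB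
  obtain ⟨MP, hMP⟩ := IsCompact.exists_bound_of_continuousOn isCompact_Icc hP
  have hMA0 : 0 ≤ MA := le_trans (norm_nonneg _) (hMA 0 h0mem)
  have hMB0 : 0 ≤ MB := le_trans (norm_nonneg _) (hMB 0 h0mem)
  have hMP0 : 0 ≤ MP := le_trans (norm_nonneg _) (hMP 0 h0mem)
  set C : ℝ := n * MA + n * (m * K * MP) + m * MB with hC
  have hcont : ContinuousOn W (Set.Icc 0 b) := fun x hx => (hW x hx).continuousWithinAt
  have hd : ∀ x ∈ Set.Ico (0:ℝ) b, HasDerivWithinAt W (W' x) (Set.Ici x) x := by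
    intro x hx
    have hmem : Set.Icc (0:ℝ) b ∈ nhdsWithin x (Set.Ici x) :=
      Filter.mem_of_superset (Icc_mem_nhdsGE_of_mem ⟨le_refl x, hx.2⟩)
        (Set.Icc_subset_Icc_left hx.1)
    exact (hW x ⟨hx.1, hx.2.le⟩).mono_of_mem_nhdsWithin hmem
  have hbound : ∀ x ∈ Set.Ico (0:ℝ) b, ‖W' x‖ ≤ C * ‖W x‖ + 0 := by
    intro x hx
    have hx' : x ∈ Set.Icc (0:ℝ) b := ⟨hx.1, hx.2.le⟩
    have h := heq x hx'
    have hW' : W' x = A x * W x - W x * P x * W x - W x * B x := by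
      apply eq_of_sub_eq_zero
      rw [← h]; abel
    rw [hW', add_zero]
    have h1 : ‖A x * W x‖ ≤ (n * MA) * ‖W x‖ := by
      calc ‖A x * W x‖ ≤ n * ‖A x‖ * ‖W x‖ := norm_matrix_mul_le' _ _
        _ ≤ (n * MA) * ‖W x‖ := by
            gcongr
            exact hMA x hx'
    have h2 : ‖W x * P x * W x‖ ≤ (n * (m * K * MP)) * ‖W x‖ := by
      calc ‖W x * P x * W x‖ ≤ n * ‖W x * P x‖ * ‖W x‖ := norm_matrix_mul_le' _ _
        _ ≤ n * (m * K * MP) * ‖W x‖ := by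
            gcongr
            calc ‖W x * P x‖ ≤ m * ‖W x‖ * ‖P x‖ := norm_matrix_mul_le' _ _
              _ ≤ m * K * MP := by
                  gcongr
                  · exact hK x hx'
                  · exact hMP x hx'
    have h3 : ‖W x * B x‖ ≤ (m * MB) * ‖W x‖ := by
      calc ‖W x * B x‖ ≤ m * ‖W x‖ * ‖B x‖ := norm_matrix_mul_le' _ _
        _ = m * ‖B x‖ * ‖W x‖ := by ring
        _ ≤ (m * MB) * ‖W x‖ := by
            gcongr
            exact hMB x hx'
    calc ‖A x * W x - W x * P x * W x - W x * B x‖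
        ≤ ‖A x * W x - W x * P x * W x‖ + ‖W x * B x‖ := norm_sub_le _ _
      _ ≤ ‖A x * W x‖ + ‖W x * P x * W x‖ + ‖W x * B x‖ := by
          gcongr
          exact norm_sub_le _ _
      _ ≤ (n * MA) * ‖W x‖ + (n * (m * K * MP)) * ‖W x‖ + (m * MB) * ‖W x‖ := by
          gcongr
      _ = C * ‖W x‖ := by rw [hC]; ring
  have hmain := norm_le_gronwallBound_of_norm_deriv_right_le (δ := 0) hcont hd
    (by simp [hW0]) hbound
  intro x hx
  have := hmain x hx
  rw [gronwallBound_ε0_δ0] at this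
  exact norm_le_zero_iff.mp this
end

section
/- (Uniqueness for the matrix Riccati equation) Let A : ℝ → Matrix (Fin n) (Fin n) ℝ, B : ℝ → Matrix (Fin m) (Fin m) ℝ, P : ℝ → Matrix (Fin m) (Fin n) ℝ, Q : ℝ → Matrix (Fin n) (Fin m) ℝ be continuous on [0, b]. If X, Y : ℝ → Matrix (Fin n) (Fin m) ℝ are both differentiable and bounded on [0, b], both satisfy d/dx W(x) + W(x)·P(x)·W(x) + W(x)·B(x) − A(x)·W(x) − Q(x) = 0 on [0, b], and X(0) = Y(0), then X(x) = Y(x) for all x ∈ [0, b]. -/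
open MeasureTheory Matrix

/- Matrices are equipped with the elementwise sup norm. -/
attribute [local instance] Matrix.normedAddCommGroup Matrix.normedSpace

private lemma matrix_norm_mul_le {α β γ : Type*} [Fintype α] [Fintype β] [Fintype γ]
    (M : Matrix α β ℝ) (N : Matrix β γ ℝ) :
    ‖M * N‖ ≤ (Fintype.card β : ℝ) * ‖M‖ * ‖N‖ := by
  rw [Matrix.norm_le_iff (by positivity)]
  intro i j
  rw [Matrix.mul_apply]
  calc ‖∑ k, M i k * N k j‖ ≤ ∑ k, ‖M i k * N k j‖ := norm_sum_le _ _
    _ ≤ ∑ _k : β, ‖M‖ * ‖N‖ := by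
        refine Finset.sum_le_sum fun k _ => ?_
        rw [norm_mul]
        exact mul_le_mul (Matrix.norm_entry_le_entrywise_sup_norm M)
          (Matrix.norm_entry_le_entrywise_sup_norm N) (norm_nonneg _) (norm_nonneg _)
    _ = (Fintype.card β : ℝ) * ‖M‖ * ‖N‖ := by
        simp [Finset.sum_const, mul_assoc, Finset.card_univ]

/-- uniqueness for the matrix Riccati equation: two bounded differentiable
solutions with the same initial value agree on `[0,b]`. -/
theorem riccati_uniqueness {n m : ℕ} (b : ℝ)
    (A : ℝ → Matrix (Fin n) (Fin n) ℝ) (B : ℝ → Matrix (Fin m) (Fin m) ℝ)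
    (P : ℝ → Matrix (Fin m) (Fin n) ℝ) (Q : ℝ → Matrix (Fin n) (Fin m) ℝ)
    (hA : ContinuousOn A (Set.Icc 0 b)) (hB : ContinuousOn B (Set.Icc 0 b))
    (hP : ContinuousOn P (Set.Icc 0 b)) (hQ : ContinuousOn Q (Set.Icc 0 b))
    (X Y X' Y' : ℝ → Matrix (Fin n) (Fin m) ℝ)
    (hX : ∀ x ∈ Set.Icc (0:ℝ) b, HasDerivWithinAt X (X' x) (Set.Icc 0 b) x)
    (hY : ∀ x ∈ Set.Icc (0:ℝ) b, HasDerivWithinAt Y (Y' x) (Set.Icc 0 b) x)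
    (hXbdd : ∃ K, ∀ x ∈ Set.Icc (0:ℝ) b, ‖X x‖ ≤ K)
    (hYbdd : ∃ K, ∀ x ∈ Set.Icc (0:ℝ) b, ‖Y x‖ ≤ K)
    (hXeq : ∀ x ∈ Set.Icc (0:ℝ) b,
      X' x + X x * P x * X x + X x * B x - A x * X x - Q x = 0)
    (hYeq : ∀ x ∈ Set.Icc (0:ℝ) b,
      Y' x + Y x * P x * Y x + Y x * B x - A x * Y x - Q x = 0)
    (h0 : X 0 = Y 0) :
    ∀ x ∈ Set.Icc (0:ℝ) b, X x = Y x := by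
  obtain ⟨KX, hKX⟩ := hXbdd
  obtain ⟨KY, hKY⟩ := hYbdd
  obtain ⟨KA, hKA⟩ := isCompact_Icc.exists_bound_of_continuousOn hA
  obtain ⟨KB, hKB⟩ := isCompact_Icc.exists_bound_of_continuousOn hB
  obtain ⟨KP, hKP⟩ := isCompact_Icc.exists_bound_of_continuousOn hP
  set Z : ℝ → Matrix (Fin n) (Fin m) ℝ := fun x => X x - Y x with hZdef
  set Z' : ℝ → Matrix (Fin n) (Fin m) ℝ := fun x => X' x - Y' x with hZ'def
  have hZderiv : ∀ x ∈ Set.Icc (0:ℝ) b, HasDerivWithinAt Z (Z' x) (Set.Icc 0 b) x :=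
    fun x hx => (hX x hx).sub (hY x hx)
  have hZcont : ContinuousOn Z (Set.Icc 0 b) :=
    fun x hx => (hZderiv x hx).continuousWithinAt
  have hZ'eq : ∀ x ∈ Set.Icc (0:ℝ) b,
      Z' x = A x * Z x - Z x * B x - X x * (P x * Z x) - Z x * (P x * Y x) := by
    intro x hx
    have hx1 : X' x = A x * X x + Q x - X x * P x * X x - X x * B x := by
      apply eq_of_sub_eq_zero
      rw [← hXeq x hx]; abel
    have hy1 : Y' x = A x * Y x + Q x - Y x * P x * Y x - Y x * B x := by
      apply eq_of_sub_eq_zero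
      rw [← hYeq x hx]; abel
    show X' x - Y' x = _
    rw [hx1, hy1]
    show _ = A x * (X x - Y x) - (X x - Y x) * B x - X x * (P x * (X x - Y x))
      - (X x - Y x) * (P x * Y x)
    simp only [Matrix.mul_sub, Matrix.sub_mul, ← Matrix.mul_assoc]
    abel
  -- nonnegative bounds
  set CA : ℝ := max KA 0
  set CB : ℝ := max KB 0
  set CP : ℝ := max KP 0
  set CX : ℝ := max KX 0
  set CY : ℝ := max KY 0
  set K : ℝ := (n : ℝ) * CA + (m : ℝ) * CB + (m : ℝ) * CX * ((n : ℝ) * CP)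
    + (m : ℝ) * ((n : ℝ) * CP * CY) with hK
  have hbound : ∀ x ∈ Set.Ico (0:ℝ) b, ‖Z' x‖ ≤ K * ‖Z x‖ + 0 := by
    intro x hx
    have hx' : x ∈ Set.Icc (0:ℝ) b := Set.Ico_subset_Icc_self hx
    have hA' : ‖A x‖ ≤ CA := le_trans (hKA x hx') (le_max_left _ _)
    have hB' : ‖B x‖ ≤ CB := le_trans (hKB x hx') (le_max_left _ _)
    have hP' : ‖P x‖ ≤ CP := le_trans (hKP x hx') (le_max_left _ _)
    have hX' : ‖X x‖ ≤ CX := le_trans (hKX x hx') (le_max_left _ _)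
    have hY' : ‖Y x‖ ≤ CY := le_trans (hKY x hx') (le_max_left _ _)
    have hCA : (0:ℝ) ≤ CA := le_max_right _ _
    have hCB : (0:ℝ) ≤ CB := le_max_right _ _
    have hCP : (0:ℝ) ≤ CP := le_max_right _ _
    have hCX : (0:ℝ) ≤ CX := le_max_right _ _
    have hCY : (0:ℝ) ≤ CY := le_max_right _ _
    have hZn : (0:ℝ) ≤ ‖Z x‖ := norm_nonneg _
    rw [hZ'eq x hx']
    have t1 : ‖A x * Z x‖ ≤ (n : ℝ) * CA * ‖Z x‖ := by
      calc ‖A x * Z x‖ ≤ (Fintype.card (Fin n) : ℝ) * ‖A x‖ * ‖Z x‖ :=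
            matrix_norm_mul_le _ _
        _ ≤ (n : ℝ) * CA * ‖Z x‖ := by
            simp only [Fintype.card_fin]
            gcongr
    have t2 : ‖Z x * B x‖ ≤ (m : ℝ) * CB * ‖Z x‖ := by
      calc ‖Z x * B x‖ ≤ (Fintype.card (Fin m) : ℝ) * ‖Z x‖ * ‖B x‖ :=
            matrix_norm_mul_le _ _
        _ ≤ (m : ℝ) * CB * ‖Z x‖ := by
            simp only [Fintype.card_fin]
            rw [mul_right_comm]
            gcongr
    have tpz : ‖P x * Z x‖ ≤ (n : ℝ) * CP * ‖Z x‖ := by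
      calc ‖P x * Z x‖ ≤ (Fintype.card (Fin n) : ℝ) * ‖P x‖ * ‖Z x‖ :=
            matrix_norm_mul_le _ _
        _ ≤ (n : ℝ) * CP * ‖Z x‖ := by
            simp only [Fintype.card_fin]; gcongr
    have tpy : ‖P x * Y x‖ ≤ (n : ℝ) * CP * CY := by
      calc ‖P x * Y x‖ ≤ (Fintype.card (Fin n) : ℝ) * ‖P x‖ * ‖Y x‖ :=
            matrix_norm_mul_le _ _
        _ ≤ (n : ℝ) * CP * CY := by
            simp only [Fintype.card_fin]; gcongr
    have t3 : ‖X x * (P x * Z x)‖ ≤ (m : ℝ) * CX * ((n : ℝ) * CP) * ‖Z x‖ := by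
      calc ‖X x * (P x * Z x)‖ ≤ (Fintype.card (Fin m) : ℝ) * ‖X x‖ * ‖P x * Z x‖ :=
            matrix_norm_mul_le _ _
        _ ≤ (m : ℝ) * CX * ((n : ℝ) * CP * ‖Z x‖) := by
            simp only [Fintype.card_fin]
            gcongr
        _ = (m : ℝ) * CX * ((n : ℝ) * CP) * ‖Z x‖ := by ring
    have t4 : ‖Z x * (P x * Y x)‖ ≤ (m : ℝ) * ((n : ℝ) * CP * CY) * ‖Z x‖ := by
      calc ‖Z x * (P x * Y x)‖ ≤ (Fintype.card (Fin m) : ℝ) * ‖Z x‖ * ‖P x * Y x‖ :=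
            matrix_norm_mul_le _ _
        _ ≤ (m : ℝ) * ‖Z x‖ * ((n : ℝ) * CP * CY) := by
            simp only [Fintype.card_fin]
            gcongr
        _ = (m : ℝ) * ((n : ℝ) * CP * CY) * ‖Z x‖ := by ring
    calc ‖A x * Z x - Z x * B x - X x * (P x * Z x) - Z x * (P x * Y x)‖
        ≤ ‖A x * Z x - Z x * B x - X x * (P x * Z x)‖ + ‖Z x * (P x * Y x)‖ :=
          norm_sub_le _ _
      _ ≤ (‖A x * Z x - Z x * B x‖ + ‖X x * (P x * Z x)‖) + ‖Z x * (P x * Y x)‖ := by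
          gcongr; exact norm_sub_le _ _
      _ ≤ ((‖A x * Z x‖ + ‖Z x * B x‖) + ‖X x * (P x * Z x)‖) + ‖Z x * (P x * Y x)‖ := by
          gcongr; exact norm_sub_le _ _
      _ ≤ (((n : ℝ) * CA * ‖Z x‖ + (m : ℝ) * CB * ‖Z x‖)
            + (m : ℝ) * CX * ((n : ℝ) * CP) * ‖Z x‖)
            + (m : ℝ) * ((n : ℝ) * CP * CY) * ‖Z x‖ := by
          gcongr
      _ = K * ‖Z x‖ + 0 := by rw [hK]; ring
  have hright : ∀ x ∈ Set.Ico (0:ℝ) b, HasDerivWithinAt Z (Z' x) (Set.Ici x) x := by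
    intro x hx
    exact (hZderiv x (Set.Ico_subset_Icc_self hx)).mono_of_mem_nhdsWithin
      (Icc_mem_nhdsGE_of_mem hx)
  have hZ0 : ‖Z 0‖ ≤ 0 := by simp [hZdef, h0]
  have key := norm_le_gronwallBound_of_norm_deriv_right_le hZcont hright hZ0 hbound
  intro x hx
  have := key x hx
  rw [gronwallBound_ε0] at this
  simp only [zero_mul] at this
  have hz : Z x = 0 := norm_le_zero_iff.mp this
  exact sub_eq_zero.mp hz
end
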